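/- arXiv:1907.00405 — 4 statements merged into one kernel-verified Lean document; each statement's English description precedes it below -/
import Mathlib

section
/- For complex numbers a_0, a_1, ..., a_{2^s} and any integer j_0 with 0 ≤ j_0 ≤ 2^s, the maximum of |a_j| over 0 ≤ j ≤ 2^s is at most |a_{j_0}| + √2 · ∑_{l=0}^{s} ( ∑_{0 ≤ κ < 2^{s-l}} |a_{(κ+1)·2^l} − a_{κ·2^l}|² )^{1/2}. -/
/-- `u + v ≤ √2 √(u² + v²)` for nonnegative reals. -/
lemma rm_aux_sqrt2 (u v : ℝ) (hu : 0 ≤ u) (hv : 0 ≤ v) :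
    u + v ≤ Real.sqrt 2 * Real.sqrt (u^2 + v^2) := by
  have h : (u + v)^2 ≤ 2 * (u^2 + v^2) := by nlinarith [sq_nonneg (u - v)]
  calc u + v = Real.sqrt ((u+v)^2) := (Real.sqrt_sq (by positivity)).symm
    _ ≤ Real.sqrt (2 * (u^2 + v^2)) := Real.sqrt_le_sqrt h
    _ = Real.sqrt 2 * Real.sqrt (u^2 + v^2) := Real.sqrt_mul (by norm_num) _

/-- Each dyadic-rounding step is either zero or a dyadic difference. -/
lemma rm_aux_step (s l : ℕ) (a : ℕ → ℂ) (n : ℕ) (hn : n ≤ 2^s) (hl : l ≤ s) :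
    (a (2^l * (n / 2^l)) - a (2^(l+1) * (n / 2^(l+1))) = 0) ∨
    ∃ κ < 2^(s-l), a (2^l * (n / 2^l)) - a (2^(l+1) * (n / 2^(l+1)))
      = a ((κ+1)*2^l) - a (κ*2^l) := by
  have hdd : n / 2^(l+1) = (n / 2^l) / 2 := by
    rw [Nat.div_div_eq_div_mul, pow_succ]
  rcases Nat.even_or_odd (n / 2^l) with he | ho
  · left
    obtain ⟨k, hk⟩ := he
    have h2 : (k + k) / 2 = k := by omega
    have : 2^l * (n/2^l) = 2^(l+1) * (n/2^(l+1)) := by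
      rw [hdd, hk, h2, pow_succ]; ring
    rw [this, sub_self]
  · right
    obtain ⟨k, hk⟩ := ho
    have hk2 : n / 2^(l+1) = k := by rw [hdd]; omega
    refine ⟨2*k, ?_, ?_⟩
    · have hle : n / 2^l ≤ 2^(s-l) := by
        calc n / 2^l ≤ 2^s / 2^l := Nat.div_le_div_right hn
          _ = 2^(s-l) := Nat.pow_div hl (by norm_num)
      omega
    · have e1 : 2^l * (n/2^l) = (2*k+1)*2^l := by rw [hk]; ring
      have e2 : 2^(l+1) * (n/2^(l+1)) = 2*k*2^l := by rw [hk2, pow_succ]; ring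
      rw [e1, e2]

/-- Rademacher–Menshov-type numerical inequality. -/
theorem stmt0 (s : ℕ) (a : ℕ → ℂ) (j₀ : ℕ) (hj₀ : j₀ ≤ 2^s) :
    ∀ j ≤ 2^s, ‖a j‖ ≤ ‖a j₀‖ +
      Real.sqrt 2 * ∑ l ∈ Finset.range (s+1),
        Real.sqrt (∑ κ ∈ Finset.range (2^(s-l)),
          ‖a ((κ+1)*2^l) - a (κ*2^l)‖^2) := by
  intro j hj
  set S : ℕ → ℝ := fun l => ∑ κ ∈ Finset.range (2^(s-l)),
      ‖a ((κ+1)*2^l) - a (κ*2^l)‖^2 with hS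
  have hSnn : ∀ l, 0 ≤ S l := fun l => Finset.sum_nonneg fun κ _ => by positivity
  have hterm : ∀ l, ∀ κ < 2^(s-l),
      ‖a ((κ+1)*2^l) - a (κ*2^l)‖^2 ≤ S l := by
    intro l κ hκ
    exact Finset.single_le_sum (f := fun κ => ‖a ((κ+1)*2^l) - a (κ*2^l)‖^2)
      (fun i _ => by positivity) (Finset.mem_range.mpr hκ)
  -- telescoping
  have htel : ∀ n, n ≤ 2^s → ∑ l ∈ Finset.range (s+1),
      (a (2^l * (n / 2^l)) - a (2^(l+1) * (n / 2^(l+1)))) = a n - a 0 := by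
    intro n hn
    have h := Finset.sum_range_sub' (f := fun l => a (2^l * (n / 2^l))) (n := s+1)
    simp only [pow_zero, one_mul, Nat.div_one] at h
    rw [h]
    have : n / 2^(s+1) = 0 :=
      Nat.div_eq_of_lt (lt_of_le_of_lt hn (Nat.pow_lt_pow_succ (by norm_num)))
    rw [this, mul_zero]
  -- per-scale bound
  have hscale : ∀ l ≤ s, ‖(a (2^l * (j / 2^l)) - a (2^(l+1) * (j / 2^(l+1)))) -
       (a (2^l * (j₀ / 2^l)) - a (2^(l+1) * (j₀ / 2^(l+1))))‖
      ≤ Real.sqrt 2 * Real.sqrt (S l) := by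
    intro l hl
    have hs2 : (1:ℝ) ≤ Real.sqrt 2 := by
      rw [show (1:ℝ) = Real.sqrt 1 by simp]
      exact Real.sqrt_le_sqrt (by norm_num)
    have single : ∀ x : ℂ, ‖x‖ ^ 2 ≤ S l →
        ‖x‖ ≤ Real.sqrt 2 * Real.sqrt (S l) := by
      intro x hx
      calc ‖x‖ = Real.sqrt (‖x‖ ^ 2) := by
            rw [Real.sqrt_sq (by positivity)]
        _ ≤ Real.sqrt (S l) := Real.sqrt_le_sqrt hx
        _ ≤ Real.sqrt 2 * Real.sqrt (S l) := by
            nlinarith [Real.sqrt_nonneg (S l)]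
    rcases rm_aux_step s l a j hj hl with h1 | ⟨κ₁, hκ₁, h1⟩
    · rcases rm_aux_step s l a j₀ hj₀ hl with h2 | ⟨κ₂, hκ₂, h2⟩
      · rw [h1, h2, sub_zero, norm_zero]; positivity
      · rw [h1, h2, zero_sub, norm_neg]
        exact single _ (hterm l κ₂ hκ₂)
    · rcases rm_aux_step s l a j₀ hj₀ hl with h2 | ⟨κ₂, hκ₂, h2⟩
      · rw [h1, h2, sub_zero]
        exact single _ (hterm l κ₁ hκ₁)
      · rw [h1, h2]
        by_cases hκ : κ₁ = κ₂
        · subst hκ; rw [sub_self, norm_zero]; positivity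
        · have hsum : ‖a ((κ₁+1)*2^l) - a (κ₁*2^l)‖^2
              + ‖a ((κ₂+1)*2^l) - a (κ₂*2^l)‖^2 ≤ S l := by
            have hp := Finset.sum_pair (f := fun κ =>
              ‖a ((κ+1)*2^l) - a (κ*2^l)‖^2) hκ
            rw [hS, ← hp]
            apply Finset.sum_le_sum_of_subset_of_nonneg
            · intro x hx
              simp only [Finset.mem_insert, Finset.mem_singleton] at hx
              rcases hx with rfl | rfl <;> exact Finset.mem_range.mpr (by assumption)
            · intro i _ _; positivity
          calc ‖(a ((κ₁+1)*2^l) - a (κ₁*2^l)) - (a ((κ₂+1)*2^l) - a (κ₂*2^l))‖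
              ≤ ‖a ((κ₁+1)*2^l) - a (κ₁*2^l)‖
                + ‖a ((κ₂+1)*2^l) - a (κ₂*2^l)‖ := by
                exact (norm_sub_le_norm_sub_add_norm_sub _ 0 _).trans (by
                  rw [sub_zero, zero_sub, norm_neg])
            _ ≤ Real.sqrt 2 * Real.sqrt (‖a ((κ₁+1)*2^l) - a (κ₁*2^l)‖^2
                + ‖a ((κ₂+1)*2^l) - a (κ₂*2^l)‖^2) :=
                rm_aux_sqrt2 _ _ (by positivity) (by positivity)
            _ ≤ Real.sqrt 2 * Real.sqrt (S l) := by gcongr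
  -- assemble
  have hdiff : ‖a j - a j₀‖ ≤
      Real.sqrt 2 * ∑ l ∈ Finset.range (s+1), Real.sqrt (S l) := by
    have hd : a j - a j₀ = ∑ l ∈ Finset.range (s+1),
        ((a (2^l * (j / 2^l)) - a (2^(l+1) * (j / 2^(l+1)))) -
         (a (2^l * (j₀ / 2^l)) - a (2^(l+1) * (j₀ / 2^(l+1))))) := by
      rw [Finset.sum_sub_distrib, htel j hj, htel j₀ hj₀]; ring
    rw [hd, Finset.mul_sum]
    calc ‖∑ l ∈ Finset.range (s+1),
          ((a (2^l * (j / 2^l)) - a (2^(l+1) * (j / 2^(l+1)))) -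
           (a (2^l * (j₀ / 2^l)) - a (2^(l+1) * (j₀ / 2^(l+1)))))‖ ≤ _ :=
        norm_sum_le _ _
      _ ≤ ∑ l ∈ Finset.range (s+1), Real.sqrt 2 * Real.sqrt (S l) :=
        Finset.sum_le_sum fun l hl =>
          hscale l (Nat.lt_succ_iff.mp (Finset.mem_range.mp hl))
  have key : ‖a j‖ ≤ ‖a j₀‖ + ‖a j - a j₀‖ := by
    have h : a j = a j₀ + (a j - a j₀) := by ring
    nth_rewrite 1 [h]
    exact norm_add_le _ _
  calc ‖a j‖ ≤ ‖a j₀‖ + ‖a j - a j₀‖ := key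
    _ ≤ _ := by linarith [hdiff]
end

section
/- Let q be a positive integer, a an integer, b ∈ ℤⁿ, d a positive integer, and suppose gcd(a, b₁, ..., bₙ, q) = 1 but gcd(a, q) > 1. Then the normalized exponential sum S(a/q, b/q) = q^{-n} · ∑_{r ∈ ([0,q) ∩ ℤ)ⁿ} e( (a/q)·|r|^{2d} + (b/q)·r ) equals 0, where |r|² = r₁² + ... + rₙ² and e(x) = exp(2πix). -/
/-- Vanishing of the complete exponential sum `S(a/q, b/q)` when
`gcd(a, b₁, …, bₙ, q) = 1` but `gcd(a, q) > 1`. -/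
theorem stmt1 (n d q : ℕ) (hn : 0 < n) (hd : 0 < d) (hq : 0 < q)
    (a : ℤ) (b : Fin n → ℤ)
    (hcop : Int.gcd a ((Int.gcd (Finset.univ.gcd b) (q:ℤ) : ℕ) : ℤ) = 1)
    (hnotcop : 1 < Int.gcd a (q:ℤ)) :
    (1/(q:ℂ)^n) * ∑ r : Fin n → Fin q,
      Complex.exp (2*Real.pi*Complex.I *
        (((a:ℂ)/(q:ℂ)) * (∑ i, ((r i : ℕ) : ℂ)^2)^d
          + ∑ i, ((b i : ℂ)/(q:ℂ)) * ((r i : ℕ) : ℂ))) = 0 := by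
  haveI : NeZero q := ⟨hq.ne'⟩
  have hqC : (q:ℂ) ≠ 0 := Nat.cast_ne_zero.mpr hq.ne'
  set p := (Int.gcd a (q:ℤ)).minFac with hpdef
  have hpp : p.Prime := Nat.minFac_prime (by omega)
  have hpg : p ∣ Int.gcd a (q:ℤ) := Nat.minFac_dvd _
  have hpa : (p:ℤ) ∣ a :=
    dvd_trans (Int.natCast_dvd_natCast.mpr hpg) (Int.gcd_dvd_left a (q:ℤ))
  have hpq : p ∣ q := by
    have h := dvd_trans (Int.natCast_dvd_natCast.mpr hpg)
      (Int.gcd_dvd_right (a := a) (b := (q:ℤ)))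
    exact_mod_cast h
  obtain ⟨a', ha'⟩ := hpa
  obtain ⟨q', hq'⟩ := hpq
  have hp2 : 2 ≤ p := hpp.two_le
  have hq'0 : 0 < q' := Nat.pos_of_ne_zero (by rintro rfl; omega)
  have hqZ : (q:ℤ) = (p:ℤ) * (q':ℤ) := by exact_mod_cast congrArg (Nat.cast : ℕ → ℤ) hq'
  -- there is a coordinate not divisible by p
  have hex : ∃ i, ¬ (p:ℤ) ∣ b i := by
    by_contra h
    push_neg at h
    have h1 : (p:ℤ) ∣ Finset.univ.gcd b := Finset.dvd_gcd (fun i _ => h i)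
    have h2 : (p:ℤ) ∣ (q:ℤ) := ⟨q', hqZ⟩
    have h3 : (p:ℤ) ∣ ((Int.gcd (Finset.univ.gcd b) (q:ℤ) : ℕ) : ℤ) := Int.dvd_coe_gcd h1 h2
    have h4 : (p:ℤ) ∣ ((Int.gcd a ((Int.gcd (Finset.univ.gcd b) (q:ℤ) : ℕ) : ℤ) : ℕ) : ℤ) :=
      Int.dvd_coe_gcd ⟨a', ha'⟩ h3
    rw [hcop] at h4
    have hple : (p:ℤ) ≤ 1 := Int.le_of_dvd one_pos h4
    have h2p : (2:ℤ) ≤ p := by exact_mod_cast hp2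
    omega
  obtain ⟨i₀, hbi⟩ := hex
  -- integer phase
  set A : (Fin n → ℤ) → ℤ := fun x => a * (∑ i, x i ^ 2) ^ d + ∑ i, b i * x i with hA
  set C : ℂ := 2*Real.pi*Complex.I/q with hC
  set F : (Fin n → Fin q) → ℂ :=
    fun r => Complex.exp (C * ((A (fun i => ((r i : ℕ) : ℤ)) : ℤ) : ℂ)) with hF
  -- periodicity helper
  have hper : ∀ (m k : ℤ), Complex.exp (C * ((m + q*k : ℤ) : ℂ)) = Complex.exp (C * (m : ℂ)) := by
    intro m k
    push_cast
    rw [mul_add, Complex.exp_add]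
    have h1 : C * ((q:ℂ)*k) = (k:ℂ) * (2*Real.pi*Complex.I) := by
      rw [hC]; field_simp
    rw [h1, Complex.exp_int_mul_two_pi_mul_I, mul_one]
  -- rewrite the summand
  have hFA : ∀ r : Fin n → Fin q,
      Complex.exp (2*Real.pi*Complex.I *
        (((a:ℂ)/(q:ℂ)) * (∑ i, ((r i : ℕ) : ℂ)^2)^d
          + ∑ i, ((b i : ℂ)/(q:ℂ)) * ((r i : ℕ) : ℂ))) = F r := by
    intro r
    simp only [hF]
    congr 1
    rw [hC]
    simp only [hA]
    have hL : ∑ i, ((b i : ℂ)/(q:ℂ)) * ((r i : ℕ) : ℂ)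
        = (∑ i, ((b i:ℂ) * ((r i : ℕ):ℂ))) / (q:ℂ) := by
      rw [Finset.sum_div]
      exact Finset.sum_congr rfl (fun i _ => by ring)
    rw [hL]
    push_cast
    field_simp
  -- translation equiv
  set c : Fin q := (Fin.ofNat q q' : Fin q) with hc
  let e : (Fin n → Fin q) ≃ (Fin n → Fin q) :=
    ⟨fun r i => if i = i₀ then r i + c else r i,
     fun r i => if i = i₀ then r i - c else r i,
     by intro r; funext i; by_cases h : i = i₀ <;> simp [h],
     by intro r; funext i; by_cases h : i = i₀ <;> simp [h]⟩
  have he1 : ∀ (r : Fin n → Fin q) (i : Fin n), i ≠ i₀ → (e r) i = r i := by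
    intro r i hi
    simp [e, hi]
  have he2 : ∀ (r : Fin n → Fin q), (e r) i₀ = r i₀ + c := by
    intro r
    simp [e]
  set ζ : ℂ := Complex.exp (C * ((b i₀ * (q':ℤ) : ℤ) : ℂ)) with hζ
  -- the key step: F (e r) = ζ * F r
  have hkey : ∀ r : Fin n → Fin q, F (e r) = ζ * F r := by
    intro r
    set rr : Fin n → ℤ := fun i => ((r i : ℕ) : ℤ) with hrr
    set ss : Fin n → ℤ := fun i => (((e r) i : ℕ) : ℤ) with hss
    have hssrr : ∀ i, i ≠ i₀ → ss i = rr i := by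
      intro i hi
      simp only [hss, hrr, he1 r i hi]
    -- ss i₀ ≡ rr i₀ + q' mod q
    have htval : ((e r) i₀).val = ((r i₀).val + q' % q) % q := by
      rw [he2, Fin.val_add, hc, Fin.val_ofNat]
    have htmod : ss i₀ % (q:ℤ) = (rr i₀ + (q':ℤ)) % (q:ℤ) := by
      simp only [hss, hrr]
      rw [htval]
      push_cast
      rw [Int.emod_emod_of_dvd _ dvd_rfl, Int.add_emod, Int.emod_emod_of_dvd _ dvd_rfl,
        ← Int.add_emod]
    obtain ⟨k, hk⟩ : (q:ℤ) ∣ (rr i₀ + (q':ℤ)) - ss i₀ := Int.ModEq.dvd htmod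
    have ht : ss i₀ = rr i₀ + (q':ℤ) - q * k := by omega
    -- sum splittings
    have hsq : ∑ i, ss i ^ 2 = (∑ i, rr i ^ 2) + (ss i₀ ^ 2 - rr i₀ ^ 2) := by
      rw [← Finset.add_sum_erase _ (fun i => ss i ^ 2) (Finset.mem_univ i₀),
        ← Finset.add_sum_erase _ (fun i => rr i ^ 2) (Finset.mem_univ i₀),
        Finset.sum_congr rfl (fun i hi => by
          rw [hssrr i (Finset.ne_of_mem_erase hi)])]
      ring
    have hlin : ∑ i, b i * ss i = (∑ i, b i * rr i) + b i₀ * (ss i₀ - rr i₀) := by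
      rw [← Finset.add_sum_erase _ (fun i => b i * ss i) (Finset.mem_univ i₀),
        ← Finset.add_sum_erase _ (fun i => b i * rr i) (Finset.mem_univ i₀),
        Finset.sum_congr rfl (fun i hi => by
          rw [hssrr i (Finset.ne_of_mem_erase hi)])]
      ring
    set w : ℤ := (ss i₀ + rr i₀) * (1 - p * k) with hw
    have hsq2 : ∑ i, ss i ^ 2 = (∑ i, rr i ^ 2) + (q':ℤ) * w := by
      rw [hsq, hw, ht, hqZ]; ring
    have hbase : (∑ i, rr i ^ 2) + (q':ℤ) * w ≡ (∑ i, rr i ^ 2) [ZMOD (q':ℤ)] :=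
      Int.ModEq.symm (Int.modEq_iff_dvd.mpr ⟨w, by ring⟩)
    obtain ⟨W, hW⟩ := (hbase.pow d).dvd
    have hpowval : ((∑ i, rr i ^ 2) + (q':ℤ) * w) ^ d = (∑ i, rr i ^ 2) ^ d - q' * W := by
      linarith [hW]
    have hAval : A ss = (A rr + b i₀ * (q':ℤ)) + (q:ℤ) * (-(a'*W) - b i₀ * k) := by
      simp only [hA]
      rw [hsq2, hpowval, hlin, ht, hqZ, ha']
      ring
    have h1 : F (e r) = Complex.exp (C * ((A ss : ℤ) : ℂ)) := by
      simp only [hF]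
      rfl
    rw [h1, hAval, hper]
    simp only [hζ, hF]
    rw [← hrr]
    push_cast
    rw [mul_add, Complex.exp_add]
    ring
  -- conclude
  set S : ℂ := ∑ r : Fin n → Fin q, F r with hS
  have hSe : S = ζ * S := by
    rw [hS]
    calc ∑ r : Fin n → Fin q, F r = ∑ r : Fin n → Fin q, F (e r) := (Equiv.sum_comp e F).symm
    _ = ∑ r : Fin n → Fin q, ζ * F r := Finset.sum_congr rfl (fun r _ => hkey r)
    _ = ζ * ∑ r : Fin n → Fin q, F r := by rw [Finset.mul_sum]
  have hζne : ζ ≠ 1 := by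
    intro h
    rw [hζ, Complex.exp_eq_one_iff] at h
    obtain ⟨m, hm⟩ := h
    rw [hC] at hm
    have h2pi : (2*(Real.pi:ℂ)*Complex.I) ≠ 0 := Complex.two_pi_I_ne_zero
    have hb : ((b i₀ * (q':ℤ) : ℤ) : ℂ) = (m:ℂ) * q := by
      field_simp at hm
      push_cast
      have h6 := mul_left_cancel₀ h2pi (by push_cast at hm; linear_combination (2*(Real.pi:ℂ)*Complex.I) * hm :
        (2*(Real.pi:ℂ)*Complex.I) * ((b i₀ : ℂ) * (q':ℕ)) = (2*(Real.pi:ℂ)*Complex.I) * ((m:ℂ) * q))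
      exact h6
    have hZ : b i₀ * (q':ℤ) = m * q := by exact_mod_cast hb
    rw [hqZ] at hZ
    have hq'Z : (q':ℤ) ≠ 0 := by exact_mod_cast hq'0.ne'
    have hb2 : b i₀ = m * p := by
      have h5 : b i₀ * (q':ℤ) = (m * p) * q' := by linarith [hZ]
      exact mul_right_cancel₀ hq'Z h5
    exact hbi ⟨m, by rw [hb2]; ring⟩
  have hS0 : S = 0 := by
    have h1 : (ζ - 1) * S = 0 := by rw [sub_mul, one_mul, ← hSe, sub_self]
    rcases mul_eq_zero.mp h1 with h | h
    · exact absurd (sub_eq_zero.mp h) hζne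
    · exact h
  rw [Finset.sum_congr rfl (fun r _ => hFA r), ← hS, hS0, mul_zero]
end

section
/- Let q be a positive integer, c ∈ ℝ with 0 < c, and define E = { w ∈ ℤ : gcd(2d·w, q) ≥ q^{c} } for a fixed positive integer d (assume q^c ≥ 1). Then for every z ∈ ℤ and every integer N ≥ q, |E ∩ (z + [0,N) ∩ ℤ)| ≤ C_ε · N · q^{-c + ε} for every ε > 0, where C_ε depends only on ε and d. -/
open scoped Classical


lemma divisor_bound : ∀ ε : ℝ, 0 < ε → ∃ C : ℝ, 0 < C ∧
    ∀ q : ℕ, 0 < q → (q.divisors.card : ℝ) ≤ C * (q:ℝ) ^ ε := by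
  intro ε hε
  set B : ℕ := ⌈(2:ℝ) ^ (1/ε)⌉₊ with hB
  set M : ℝ := max 1 (1 / (ε * Real.log 2)) with hM
  have hM1 : (1:ℝ) ≤ M := le_max_left _ _
  have hk : 0 < ε * Real.log 2 := mul_pos hε (Real.log_pos one_lt_two)
  refine ⟨M ^ B, pow_pos (lt_of_lt_of_le one_pos hM1) _, ?_⟩
  intro q hq
  have hq0 : q ≠ 0 := hq.ne'
  -- τ(q) = ∏ (a_p + 1)
  have hτ : (q.divisors.card : ℝ) =
      ∏ p ∈ q.primeFactors, ((q.factorization p : ℝ) + 1) := by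
    rw [Nat.card_divisors hq0]
    push_cast
    rfl
  -- q^ε = ∏ p^(a_p ε)
  have hqε : (q:ℝ) ^ ε = ∏ p ∈ q.primeFactors, (p:ℝ) ^ ((q.factorization p : ℝ) * ε) := by
    conv_lhs => rw [← Nat.factorization_prod_pow_eq_self hq0]
    rw [Nat.prod_factorization_eq_prod_primeFactors]
    push_cast
    rw [← Real.finset_prod_rpow _ _ (fun p _ => by positivity)]
    refine Finset.prod_congr rfl fun p hp => ?_
    rw [← Real.rpow_natCast (p:ℝ) (q.factorization p), ← Real.rpow_mul (by positivity)]
  -- per-factor bound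
  have key : ∀ p ∈ q.primeFactors,
      ((q.factorization p : ℝ) + 1) ≤
        (if (p:ℝ) < (2:ℝ) ^ (1/ε) then M else 1) * (p:ℝ) ^ ((q.factorization p : ℝ) * ε) := by
    intro p hp
    have hp2 : (2:ℕ) ≤ p := (Nat.prime_of_mem_primeFactors hp).two_le
    have hp2R : (2:ℝ) ≤ (p:ℝ) := by exact_mod_cast hp2
    have hp0 : (0:ℝ) < p := by linarith
    set a : ℕ := q.factorization p with ha
    by_cases hcase : (p:ℝ) < (2:ℝ) ^ (1/ε)
    · simp only [hcase, if_pos]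
      have h1 : (2:ℝ) ^ ((a:ℝ) * ε) ≤ (p:ℝ) ^ ((a:ℝ) * ε) :=
        Real.rpow_le_rpow (by norm_num) hp2R (by positivity)
      have h2 : 1 + Real.log 2 * ((a:ℝ) * ε) ≤ (2:ℝ) ^ ((a:ℝ) * ε) := by
        rw [Real.rpow_def_of_pos (by norm_num)]
        linarith [Real.add_one_le_exp (Real.log 2 * ((a:ℝ) * ε))]
      have h3 : (a:ℝ) + 1 ≤ M * (1 + Real.log 2 * ((a:ℝ) * ε)) := by
        have hMk : 1 ≤ M * (ε * Real.log 2) := by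
          have : 1 / (ε * Real.log 2) ≤ M := le_max_right _ _
          calc (1:ℝ) = (1 / (ε * Real.log 2)) * (ε * Real.log 2) := by
                field_simp
            _ ≤ M * (ε * Real.log 2) := by
                exact mul_le_mul_of_nonneg_right this hk.le
        have ha0 : (0:ℝ) ≤ a := Nat.cast_nonneg a
        nlinarith [mul_le_mul_of_nonneg_right hMk ha0]
      calc (a:ℝ) + 1 ≤ M * (1 + Real.log 2 * ((a:ℝ) * ε)) := h3
        _ ≤ M * (p:ℝ) ^ ((a:ℝ) * ε) := by
            refine mul_le_mul_of_nonneg_left (h2.trans h1) (by linarith)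
    · simp only [hcase, if_neg, not_false_iff, one_mul]
      have h1 : (2:ℝ) ≤ (p:ℝ) ^ ε := by
        have := Real.rpow_le_rpow (by positivity : (0:ℝ) ≤ (2:ℝ)^(1/ε))
          (not_lt.mp hcase) hε.le
        rwa [← Real.rpow_mul (by norm_num), one_div_mul_cancel hε.ne',
          Real.rpow_one] at this
      have h2 : ((p:ℝ) ^ ε) ^ a = (p:ℝ) ^ ((a:ℝ) * ε) := by
        rw [← Real.rpow_natCast ((p:ℝ)^ε) a, ← Real.rpow_mul hp0.le, mul_comm]
      calc (a:ℝ) + 1 ≤ (2:ℝ) ^ a := by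
            exact_mod_cast Nat.succ_le_of_lt (Nat.lt_two_pow_self (n := a))
        _ ≤ ((p:ℝ) ^ ε) ^ a := pow_le_pow_left₀ (by norm_num) h1 a
        _ = (p:ℝ) ^ ((a:ℝ) * ε) := h2
  have hsplit : ∏ p ∈ q.primeFactors, (if (p:ℝ) < (2:ℝ) ^ (1/ε) then M else 1)
      = M ^ (q.primeFactors.filter (fun p : ℕ => (p:ℝ) < (2:ℝ) ^ (1/ε))).card := by
    rw [Finset.prod_ite, Finset.prod_const, Finset.prod_const, one_pow, mul_one]
  have hcard : (q.primeFactors.filter (fun p : ℕ => (p:ℝ) < (2:ℝ) ^ (1/ε))).card ≤ B := by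
    have hsub : q.primeFactors.filter (fun p : ℕ => (p:ℝ) < (2:ℝ) ^ (1/ε)) ⊆ Finset.range B := by
      intro p hp
      rw [Finset.mem_filter] at hp
      rw [Finset.mem_range]
      have : (p:ℝ) < (B:ℝ) := lt_of_lt_of_le hp.2 (Nat.le_ceil _)
      exact_mod_cast this
    exact (Finset.card_le_card hsub).trans (by simp)
  calc (q.divisors.card : ℝ)
      = ∏ p ∈ q.primeFactors, ((q.factorization p : ℝ) + 1) := hτ
    _ ≤ ∏ p ∈ q.primeFactors,
          ((if (p:ℝ) < (2:ℝ) ^ (1/ε) then M else 1) * (p:ℝ) ^ ((q.factorization p : ℝ) * ε)) :=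
        Finset.prod_le_prod (fun p _ => by positivity) key
    _ = (∏ p ∈ q.primeFactors, (if (p:ℝ) < (2:ℝ) ^ (1/ε) then M else 1)) *
          ∏ p ∈ q.primeFactors, (p:ℝ) ^ ((q.factorization p : ℝ) * ε) := Finset.prod_mul_distrib
    _ ≤ M ^ B * (q:ℝ) ^ ε := by
        rw [hsplit, ← hqε]
        refine mul_le_mul_of_nonneg_right ?_ (by positivity)
        exact pow_le_pow_right₀ hM1 hcard

lemma card_mult (m : ℤ) (hm : 0 < m) (z : ℤ) (N : ℕ) :
    (((Finset.Ico z (z + (N:ℤ))).filter (fun w => m ∣ w)).card : ℝ) ≤ (N:ℝ)/(m:ℝ) + 2 := by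
  have hcard : ((Finset.Ico z (z + (N:ℤ))).filter (fun w => m ∣ w)).card ≤
      (Finset.Ico (z / m) (z / m + ((N:ℤ) / m + 2))).card := by
    apply Finset.card_le_card_of_injOn (fun w => w / m)
    · intro w hw
      rw [Finset.mem_coe, Finset.mem_filter, Finset.mem_Ico] at hw
      obtain ⟨⟨h1, h2⟩, hdvd⟩ := hw
      rw [Finset.mem_coe, Finset.mem_Ico]
      constructor
      · exact Int.ediv_le_ediv hm h1
      · have hw' : m * (w / m) = w := Int.mul_ediv_cancel' hdvd
        have e1 : m * (z / m) + z % m = z := Int.mul_ediv_add_emod z m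
        have e2 : m * ((N:ℤ) / m) + (N:ℤ) % m = (N:ℤ) := Int.mul_ediv_add_emod _ m
        have l1 : z % m < m := Int.emod_lt_of_pos z hm
        have l2 : (N:ℤ) % m < m := Int.emod_lt_of_pos _ hm
        have : m * (w / m) < m * (z / m + ((N:ℤ) / m + 2)) := by
          rw [hw']
          have : m * (z / m + ((N:ℤ) / m + 2)) = m * (z/m) + m * ((N:ℤ)/m) + 2*m := by ring
          rw [this]
          linarith
        exact lt_of_mul_lt_mul_left this hm.le
    · intro w1 hw1 w2 hw2 h
      rw [Finset.mem_coe, Finset.mem_filter] at hw1 hw2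
      have e1 : m * (w1 / m) = w1 := Int.mul_ediv_cancel' hw1.2
      have e2 : m * (w2 / m) = w2 := Int.mul_ediv_cancel' hw2.2
      have h' : w1 / m = w2 / m := h
      rw [← e1, ← e2, h']
  have h2 : (Finset.Ico (z / m) (z / m + ((N:ℤ) / m + 2))).card = ((N:ℤ)/m + 2).toNat := by
    rw [Int.card_Ico]; congr 1; ring
  have hNm : (0:ℤ) ≤ (N:ℤ)/m := Int.ediv_nonneg (by positivity) hm.le
  have h3' : ((((N:ℤ)/m + 2).toNat : ℤ)) = (N:ℤ)/m + 2 := Int.toNat_of_nonneg (by linarith)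
  have h3 : (((N:ℤ)/m + 2).toNat : ℝ) = (((N:ℤ)/m : ℤ) : ℝ) + 2 := by
    exact_mod_cast congrArg (fun x : ℤ => (x:ℝ)) h3'
  have h4 : (((N:ℤ)/m : ℤ) : ℝ) ≤ (N:ℝ)/(m:ℝ) := by
    rw [le_div_iff₀ (by exact_mod_cast hm)]
    have := Int.ediv_mul_le (N:ℤ) hm.ne'
    exact_mod_cast this
  calc (((Finset.Ico z (z + (N:ℤ))).filter (fun w => m ∣ w)).card : ℝ)
      ≤ ((Finset.Ico (z / m) (z / m + ((N:ℤ) / m + 2))).card : ℝ) := by exact_mod_cast hcard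
    _ = (((N:ℤ)/m : ℤ) : ℝ) + 2 := by rw [h2, h3]
    _ ≤ (N:ℝ)/(m:ℝ) + 2 := by linarith

/-- Density bound for the exceptional set `{w : gcd(2dw, q) ≥ q^c}`: in any
integer interval of length `N ≥ q` it has at most `C_ε · N · q^{-c+ε}`
elements, where `C_ε` depends only on `ε` and `d`. -/
theorem stmt11 (d : ℕ) (hd : 0 < d) :
    ∀ ε : ℝ, 0 < ε → ∃ C : ℝ, 0 < C ∧
      ∀ (q : ℕ) (c : ℝ), 0 < q → 0 < c →
      ∀ (z : ℤ) (N : ℕ), q ≤ N →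
      (((Finset.Ico z (z + (N:ℤ))).filter
          (fun w => ((q:ℝ))^c ≤ (Int.gcd (2*(d:ℤ)*w) (q:ℤ) : ℝ))).card : ℝ)
        ≤ C * (N:ℝ) * (q:ℝ)^(-c+ε) := by
  intro ε hε
  obtain ⟨C₀, hC₀, hdiv⟩ := divisor_bound ε hε
  refine ⟨(2*d+2) * C₀, by positivity, ?_⟩
  intro q c hq hc z N hqN
  have hq0 : q ≠ 0 := hq.ne'
  have hqR : (0:ℝ) < q := by exact_mod_cast hq
  have hNR : (0:ℝ) < N := by
    have : 0 < N := lt_of_lt_of_le hq hqN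
    exact_mod_cast this
  set S := (Finset.Ico z (z + (N:ℤ))).filter
      (fun w => ((q:ℝ))^c ≤ (Int.gcd (2*(d:ℤ)*w) (q:ℤ) : ℝ)) with hS
  set D := q.divisors.filter (fun ν : ℕ => ((q:ℝ))^c ≤ (ν:ℝ)) with hD
  have hfib : ∀ w ∈ S, Int.gcd (2*(d:ℤ)*w) (q:ℤ) ∈ D := by
    intro w hw
    rw [hS, Finset.mem_filter] at hw
    rw [hD, Finset.mem_filter, Nat.mem_divisors]
    refine ⟨⟨?_, hq0⟩, hw.2⟩
    have h : ((Int.gcd (2*(d:ℤ)*w) (q:ℤ) : ℤ)) ∣ (q:ℤ) := Int.gcd_dvd_right _ _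
    exact_mod_cast h
  rw [Finset.card_eq_sum_card_fiberwise hfib]
  -- bound each fiber
  have hfibbd : ∀ ν ∈ D,
      ((S.filter (fun w => Int.gcd (2*(d:ℤ)*w) (q:ℤ) = ν)).card : ℝ)
        ≤ (2*d+2) * (N:ℝ) * (q:ℝ)^(-c) := by
    intro ν hν
    rw [hD, Finset.mem_filter, Nat.mem_divisors] at hν
    obtain ⟨⟨hνdvd, -⟩, hνge⟩ := hν
    have hν0 : 0 < ν := Nat.pos_of_dvd_of_pos hνdvd hq
    have hνN : ν ≤ N := le_trans (Nat.le_of_dvd hq hνdvd) hqN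
    set g := Nat.gcd ν (2*d) with hg
    have hg0 : 0 < g := Nat.gcd_pos_of_pos_left _ hν0
    set m := ν / g with hm
    have hm0 : 0 < m := Nat.div_pos (Nat.le_of_dvd hν0 (Nat.gcd_dvd_left _ _)) hg0
    have hmν : m * g = ν := Nat.div_mul_cancel (Nat.gcd_dvd_left _ _)
    have hgle : g ≤ 2*d := Nat.le_of_dvd (by omega) (Nat.gcd_dvd_right _ _)
    -- the fiber is contained in multiples of m
    have hsub : S.filter (fun w => Int.gcd (2*(d:ℤ)*w) (q:ℤ) = ν) ⊆
        (Finset.Ico z (z + (N:ℤ))).filter (fun w => ((m:ℤ)) ∣ w) := by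
      intro w hw
      rw [Finset.mem_filter] at hw
      obtain ⟨hwS, hwgcd⟩ := hw
      rw [hS, Finset.mem_filter] at hwS
      rw [Finset.mem_filter]
      refine ⟨hwS.1, ?_⟩
      have hν2dw : (ν:ℤ) ∣ 2*(d:ℤ)*w := by
        rw [← hwgcd]; exact Int.gcd_dvd_left _ _
      set d' := (2*d) / g with hd'
      have hd'2d : g * d' = 2*d := Nat.mul_div_cancel' (Nat.gcd_dvd_right _ _)
      have hcop : Nat.Coprime m d' := Nat.coprime_div_gcd_div_gcd hg0
      have hmd'w : (m:ℤ) ∣ (d':ℤ) * w := by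
        have h1 : ((g:ℤ) * (m:ℤ)) ∣ ((g:ℤ) * (d':ℤ)) * w := by
          have e1 : (g:ℤ) * (m:ℤ) = (ν:ℤ) := by exact_mod_cast (mul_comm m g ▸ hmν)
          have e2 : (g:ℤ) * (d':ℤ) = 2*(d:ℤ) := by exact_mod_cast hd'2d
          rw [e1, e2]; exact hν2dw
        rw [mul_assoc] at h1
        exact (mul_dvd_mul_iff_left (by exact_mod_cast hg0.ne' : (g:ℤ) ≠ 0)).mp h1
      have hcopZ : IsCoprime (m:ℤ) (d':ℤ) := by
        rw [Int.isCoprime_iff_gcd_eq_one]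
        exact_mod_cast hcop
      exact hcopZ.dvd_of_dvd_mul_left hmd'w
    have hmR : (0:ℝ) < m := by exact_mod_cast hm0
    have hνR : (0:ℝ) < ν := by exact_mod_cast hν0
    have hqc : (0:ℝ) < (q:ℝ)^c := Real.rpow_pos_of_pos hqR c
    have hinv : ((ν:ℝ))⁻¹ ≤ (q:ℝ)^(-c) := by
      rw [Real.rpow_neg hqR.le]
      exact inv_anti₀ hqc hνge
    calc ((S.filter (fun w => Int.gcd (2*(d:ℤ)*w) (q:ℤ) = ν)).card : ℝ)
        ≤ (((Finset.Ico z (z + (N:ℤ))).filter (fun w => ((m:ℤ)) ∣ w)).card : ℝ) := by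
          exact_mod_cast Finset.card_le_card hsub
      _ ≤ (N:ℝ)/(m:ℝ) + 2 := card_mult (m:ℤ) (by exact_mod_cast hm0) z N
      _ ≤ (2*d) * ((N:ℝ)/(ν:ℝ)) + 2 * ((N:ℝ)/(ν:ℝ)) := by
          have h1 : (N:ℝ)/(m:ℝ) ≤ (2*d) * ((N:ℝ)/(ν:ℝ)) := by
            rw [div_le_iff₀ hmR]
            have hν2dm : (ν:ℝ) ≤ (2*d) * (m:ℝ) := by
              have : ν ≤ 2*d*m := by
                calc ν = m * g := hmν.symm
                  _ ≤ m * (2*d) := Nat.mul_le_mul_left m hgle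
                  _ = 2*d*m := by ring
              exact_mod_cast this
            have e : (N:ℝ)/(ν:ℝ) * (ν:ℝ) = (N:ℝ) := div_mul_cancel₀ _ hνR.ne'
            nlinarith [mul_le_mul_of_nonneg_left hν2dm (le_of_lt (div_pos hNR hνR))]
          have h2 : (2:ℝ) ≤ 2 * ((N:ℝ)/(ν:ℝ)) := by
            have : (1:ℝ) ≤ (N:ℝ)/(ν:ℝ) := by
              rw [le_div_iff₀ hνR]
              have : (ν:ℝ) ≤ (N:ℝ) := by exact_mod_cast hνN
              linarith
            linarith
          linarith
      _ = (2*d+2) * ((N:ℝ) * ((ν:ℝ))⁻¹) := by ring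
      _ ≤ (2*d+2) * ((N:ℝ) * (q:ℝ)^(-c)) := by
          refine mul_le_mul_of_nonneg_left ?_ (by positivity)
          exact mul_le_mul_of_nonneg_left hinv hNR.le
      _ = (2*d+2) * (N:ℝ) * (q:ℝ)^(-c) := by ring
  rw [Nat.cast_sum]
  calc ∑ ν ∈ D, ((S.filter (fun w => Int.gcd (2*(d:ℤ)*w) (q:ℤ) = ν)).card : ℝ)
      ≤ ∑ ν ∈ D, (2*d+2) * (N:ℝ) * (q:ℝ)^(-c) := Finset.sum_le_sum hfibbd
    _ = (D.card : ℝ) * ((2*d+2) * (N:ℝ) * (q:ℝ)^(-c)) := by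
        rw [Finset.sum_const, nsmul_eq_mul]
    _ ≤ (q.divisors.card : ℝ) * ((2*d+2) * (N:ℝ) * (q:ℝ)^(-c)) := by
        refine mul_le_mul_of_nonneg_right ?_ (by positivity)
        exact_mod_cast Finset.card_le_card (Finset.filter_subset _ _)
    _ ≤ (C₀ * (q:ℝ)^ε) * ((2*d+2) * (N:ℝ) * (q:ℝ)^(-c)) := by
        refine mul_le_mul_of_nonneg_right (hdiv q hq) (by positivity)
    _ = (2*d+2) * C₀ * (N:ℝ) * (q:ℝ)^(-c+ε) := by
        rw [Real.rpow_add hqR]; ring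
end

section
/- Let a, q, a', q' be integers with q, q' ≥ 1, and let q_♭ = gcd(q,q'), w ∈ ℤⁿ, d ≥ 1. Then ∑_{b ∈ [0,q_♭)ⁿ ∩ ℤⁿ} S(a/q, b/q_♭) · conj(S(a'/q', b/q_♭)) · e(w · b/q_♭) = (q_♭/q')ⁿ ∑_{u ∈ [0, q'/q_♭)ⁿ ∩ ℤⁿ} q^{-n} ∑_{r ∈ [0,q)ⁿ ∩ ℤⁿ} e( (a/q)|r|^{2d} − (a'/q')|r + w + q_♭·u|^{2d} ), where S(α, β) = q^{-n} ∑_{r ∈ [0,q)ⁿ} e(α|r|^{2d} + β·r) for β with denominator dividing q, and e(x) = exp(2πix). -/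
noncomputable def eI (x : ℂ) : ℂ := Complex.exp (2*Real.pi*Complex.I * x)

lemma two_pi_I_ne_zero : (2*(Real.pi:ℂ)*Complex.I) ≠ 0 := by
  simp [Complex.I_ne_zero, Real.pi_ne_zero, Complex.ofReal_ne_zero]

lemma eI_add (x y : ℂ) : eI (x + y) = eI x * eI y := by
  rw [eI, eI, eI, mul_add, Complex.exp_add]

lemma eI_int (m : ℤ) : eI m = 1 := by
  rw [eI]; simpa [mul_comm] using Complex.exp_int_mul_two_pi_mul_I m

lemma eI_add_int (x : ℂ) (m : ℤ) : eI (x + m) = eI x := by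
  rw [eI_add, eI_int, mul_one]

lemma eI_sum {ι : Type*} (s : Finset ι) (f : ι → ℂ) :
    eI (∑ i ∈ s, f i) = ∏ i ∈ s, eI (f i) := by
  simp only [eI, Finset.mul_sum, Complex.exp_sum]

lemma eI_nat_mul (k : ℕ) (x : ℂ) : eI (k * x) = (eI x) ^ k := by
  induction k with
  | zero => simpa using eI_int 0
  | succ k ih => push_cast; rw [add_mul, one_mul, eI_add, ih, pow_succ]

lemma eI_eq_one_iff (x : ℂ) : eI x = 1 ↔ ∃ m : ℤ, x = m := by
  rw [eI, Complex.exp_eq_one_iff]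
  constructor
  · rintro ⟨m, hm⟩
    refine ⟨m, ?_⟩
    rw [mul_comm (m:ℂ)] at hm
    exact mul_left_cancel₀ two_pi_I_ne_zero hm
  · rintro ⟨m, rfl⟩; exact ⟨m, by ring⟩

/-- Character sum: `∑_{b<g} e(b m / g) = g` if `g ∣ m`, else `0`. -/
lemma char_sum (g : ℕ) (hg : 0 < g) (m : ℤ) :
    ∑ b : Fin g, eI ((b : ℕ) * m / g) = if (g:ℤ) ∣ m then (g:ℂ) else 0 := by
  have hgC : (g:ℂ) ≠ 0 := by exact_mod_cast hg.ne'
  have key : ∀ b : Fin g, eI ((b : ℕ) * m / g) = (eI (m / g)) ^ (b : ℕ) := by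
    intro b; rw [← eI_nat_mul]; ring_nf
  simp only [key]
  rw [Fin.sum_univ_eq_sum_range]
  by_cases hdvd : (g:ℤ) ∣ m
  · obtain ⟨k, hk⟩ := hdvd
    have h1 : eI ((m:ℂ) / g) = 1 := by
      have : ((m:ℂ) / g) = (k:ℂ) := by
        rw [show (m:ℂ) = (g:ℂ)*(k:ℂ) by exact_mod_cast congrArg (Int.cast : ℤ → ℂ) hk]
        field_simp
      rw [this, eI_int]
    rw [if_pos ⟨k, hk⟩]
    simp [h1]
  · have hz : eI ((m:ℂ) / g) ≠ 1 := by
      rw [Ne, eI_eq_one_iff]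
      rintro ⟨j, hj⟩
      apply hdvd
      refine ⟨j, ?_⟩
      have : (m:ℂ) = (g:ℂ) * j := by field_simp at hj; linear_combination hj
      exact_mod_cast this
    have hpow : eI ((m:ℂ) / g) ^ g = 1 := by
      rw [← eI_nat_mul, show ((g:ℂ) * ((m:ℂ) / g)) = (m:ℂ) by field_simp, eI_int]
    rw [if_neg hdvd, geom_sum_eq hz, hpow]
    simp

lemma eI_eq_of_dvd (q : ℕ) (hq : 0 < q) (c N M : ℤ) (h : (q:ℤ) ∣ N - M) :
    eI ((c:ℂ) * N / q) = eI ((c:ℂ) * M / q) := by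
  have hqC : (q:ℂ) ≠ 0 := by exact_mod_cast hq.ne'
  obtain ⟨k, hk⟩ := h
  have hN : (N:ℂ) = (M:ℂ) + (q:ℂ) * (k:ℂ) := by
    have : N = M + q * k := by linarith [hk]
    exact_mod_cast congrArg (Int.cast : ℤ → ℂ) this
  rw [show ((c:ℂ) * N / q) = (c:ℂ) * M / q + ((c*k : ℤ):ℂ) by
    push_cast; rw [hN]; field_simp]
  exact eI_add_int _ _

lemma dvd_pow_sum_sq {n : ℕ} (q : ℕ) (d : ℕ) (x y : Fin n → ℤ)
    (h : ∀ i, (q:ℤ) ∣ (x i - y i)) :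
    (q:ℤ) ∣ (∑ i, x i ^ 2)^d - (∑ i, y i ^ 2)^d := by
  have hsum : ∀ s : Finset (Fin n), (∑ i ∈ s, x i ^ 2) ≡ (∑ i ∈ s, y i ^ 2) [ZMOD (q:ℤ)] := by
    intro s
    induction s using Finset.induction with
    | empty => simp [Int.ModEq.refl]
    | insert _ _ hs ih =>
      rw [Finset.sum_insert hs, Finset.sum_insert hs]
      exact Int.ModEq.add (((Int.modEq_iff_dvd).2 (h _)).symm.pow 2) ih
  exact (Int.modEq_iff_dvd.1 ((hsum Finset.univ).pow d).symm)

lemma eI_quot_congr {n : ℕ} (q : ℕ) (hq : 0 < q) (d : ℕ) (c : ℤ) (x y : Fin n → ℤ)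
    (h : ∀ i, (q:ℤ) ∣ (x i - y i)) :
    eI ((c:ℂ) * (∑ i, ((x i : ℤ):ℂ)^2)^d / q) = eI ((c:ℂ) * (∑ i, ((y i : ℤ):ℂ)^2)^d / q) := by
  have hx : (∑ i, ((x i : ℤ):ℂ)^2)^d = (((∑ i, x i^2)^d : ℤ) : ℂ) := by push_cast; ring
  have hy : (∑ i, ((y i : ℤ):ℂ)^2)^d = (((∑ i, y i^2)^d : ℤ) : ℂ) := by push_cast; ring
  rw [hx, hy]
  exact eI_eq_of_dvd q hq c _ _ (dvd_pow_sum_sq q d x y h)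

lemma key_arith (q' g : ℕ) (hq' : 0 < q') (hg : 0 < g) (hgq' : g ∣ q')
    (V R : ℤ) (hR0 : 0 ≤ R) (hRlt : R < q') (hdvd : (g:ℤ) ∣ R - V) :
    (V + (g:ℤ) * ((((R - V)/g) % ((q'/g : ℕ):ℤ)).toNat : ℤ)) % (q':ℤ) = R := by
  have hq'Z : (0:ℤ) < q' := by exact_mod_cast hq'
  have hG : 0 < q' / g := Nat.div_pos (Nat.le_of_dvd hq' hgq') hg
  have hGq' : (g:ℤ) * ((q'/g : ℕ):ℤ) = (q':ℤ) := by
    exact_mod_cast congrArg (Nat.cast : ℕ → ℤ) (Nat.mul_div_cancel' hgq')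
  set t : ℤ := (R - V)/g with ht
  set G : ℤ := ((q'/g : ℕ):ℤ) with hGdef
  have hGpos : (0:ℤ) < G := by rw [hGdef]; exact_mod_cast hG
  have hRt : (g:ℤ) * t = R - V := Int.mul_ediv_cancel' hdvd
  have htG : (((t % G).toNat : ℤ)) = t % G :=
    Int.toNat_of_nonneg (Int.emod_nonneg t (ne_of_gt hGpos))
  have hmod : t % G = t - G * (t / G) := Int.emod_def t G
  have hdiff : (V + (g:ℤ) * (t % G)) - R = -((q':ℤ) * (t / G)) := by
    rw [hmod, mul_sub]
    rw [show (g:ℤ) * (G * (t/G)) = ((g:ℤ) * G) * (t/G) by ring, hGq']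
    rw [show (g:ℤ) * t = R - V from hRt]
    ring
  rw [htG]
  have h1 : (V + (g:ℤ) * (t % G)) % q' = R % q' :=
    Int.modEq_iff_dvd.2 ⟨t/G, by linarith [hdiff]⟩
  rw [h1, Int.emod_eq_of_lt hR0 hRlt]

/-- The bijection step: summing over `r' ∈ [0,q')ⁿ` subject to a congruence
mod `g` equals summing over `u ∈ [0, q'/g)ⁿ`. -/
lemma bij_step {n : ℕ} (d q' g : ℕ) (hq' : 0 < q') (hg : 0 < g) (hgq' : g ∣ q')
    (c : ℤ) (v : Fin n → ℤ) :
    ∑ r' : Fin n → Fin q',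
      (if ∀ i, (g:ℤ) ∣ (v i - ((r' i : ℕ):ℤ)) then ((g:ℂ))^n else 0)
        * eI ((c:ℂ) * (∑ i, (((r' i : ℕ):ℤ):ℂ)^2)^d / q')
    = (g:ℂ)^n * ∑ u : Fin n → Fin (q' / g),
        eI ((c:ℂ) * (∑ i, (((v i + (g:ℤ) * ((u i : ℕ):ℤ)) : ℤ):ℂ)^2)^d / q') := by
  classical
  have hG : 0 < q' / g := Nat.div_pos (Nat.le_of_dvd hq' hgq') hg
  have hq'Z : (0:ℤ) < q' := by exact_mod_cast hq'
  have hgZ : (0:ℤ) < g := by exact_mod_cast hg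
  have hGq' : (g:ℤ) * (q'/g : ℕ) = (q':ℤ) := by
    exact_mod_cast congrArg (Nat.cast : ℕ → ℤ) (Nat.mul_div_cancel' hgq' )
  simp only [ite_mul, zero_mul, ← Finset.sum_filter]
  rw [← Finset.mul_sum]
  congr 1
  -- bijection
  refine Finset.sum_nbij'
    (i := fun (r' : Fin n → Fin q') (i : Fin n) =>
      (⟨(((((r' i : ℕ):ℤ) - v i)/g) % ((q'/g : ℕ):ℤ)).toNat, by
        have h1 := Int.emod_nonneg ((((r' i : ℕ):ℤ) - v i)/g) (by positivity)
        have h2 := Int.emod_lt_of_pos ((((r' i : ℕ):ℤ) - v i)/g)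
          (by exact_mod_cast hG : (0:ℤ) < ((q'/g : ℕ):ℤ))
        omega⟩ : Fin (q'/g)))
    (j := fun (u : Fin n → Fin (q'/g)) (i : Fin n) =>
      (⟨((v i + (g:ℤ) * ((u i : ℕ):ℤ)) % (q':ℤ)).toNat, by
        have h1 := Int.emod_nonneg (v i + (g:ℤ) * ((u i : ℕ):ℤ)) (by positivity)
        have h2 := Int.emod_lt_of_pos (v i + (g:ℤ) * ((u i : ℕ):ℤ)) hq'Z
        omega⟩ : Fin q'))
    ?_ ?_ ?_ ?_ ?_
  · intro r' _; exact Finset.mem_univ _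
  · -- j u ∈ filter
    intro u _
    simp only [Finset.mem_filter, Finset.mem_univ, true_and]
    intro i
    have h1 := Int.emod_nonneg (v i + (g:ℤ) * ((u i : ℕ):ℤ)) (ne_of_gt hq'Z)
    rw [Int.toNat_of_nonneg h1, Int.emod_def]
    have : v i - (v i + ↑g * ↑↑(u i) - ↑q' * ((v i + ↑g * ↑↑(u i)) / ↑q'))
        = -((g:ℤ) * (u i : ℕ)) + (q':ℤ) * ((v i + ↑g * ↑↑(u i)) / ↑q') := by ring
    rw [this]
    exact dvd_add (Dvd.dvd.neg_right (dvd_mul_right _ _))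
      (dvd_mul_of_dvd_left (Int.natCast_dvd_natCast.2 hgq') _)
  · -- j (i r') = r' for r' in the filter
    intro r' hr'
    simp only [Finset.mem_filter, Finset.mem_univ, true_and] at hr'
    funext i
    apply Fin.ext
    have hdvd : (g:ℤ) ∣ ((r' i : ℕ):ℤ) - v i := by
      simpa [neg_sub] using (hr' i).neg_right
    have hkey := key_arith q' g hq' hg hgq' (v i) ((r' i : ℕ):ℤ)
      (by positivity) (by exact_mod_cast (r' i).isLt) hdvd
    dsimp only
    rw [hkey]
    simp
  · -- i (j u) = u
    intro u _
    funext i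
    apply Fin.ext
    set V : ℤ := v i
    set U : ℤ := ((u i : ℕ):ℤ) with hU
    set G : ℤ := ((q'/g : ℕ):ℤ) with hGdef
    have hGpos : (0:ℤ) < G := by rw [hGdef]; exact_mod_cast hG
    have hA0 : (0:ℤ) ≤ (V + (g:ℤ) * U) % q' := Int.emod_nonneg _ (ne_of_gt hq'Z)
    dsimp only
    rw [Int.toNat_of_nonneg hA0]
    have hAdef : (V + (g:ℤ) * U) % q' = V + g * U - q' * ((V + g * U)/q') := Int.emod_def _ _
    set k : ℤ := (V + g * U)/q' with hk
    have hsub : ((V + (g:ℤ) * U) % q') - V = (g:ℤ) * (U - G * k) := by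
      rw [hAdef, ← hGq']; ring
    rw [hsub, Int.mul_ediv_cancel_left _ (ne_of_gt hgZ)]
    have : (U - G * k) % G = U % G := by
      rw [show U - G * k = U + G * (-k) by ring]
      exact Int.add_mul_emod_self_left ..

    rw [this, Int.emod_eq_of_lt (by rw [hU]; positivity) (by rw [hU, hGdef]; exact_mod_cast (u i).isLt)]
    simp [hU]
  · -- value equality
    intro r' hr'
    simp only [Finset.mem_filter, Finset.mem_univ, true_and] at hr'
    apply eI_quot_congr q' hq' d c
    intro i
    have hdvd : (g:ℤ) ∣ ((r' i : ℕ):ℤ) - v i := by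
      simpa [neg_sub] using (hr' i).neg_right
    have hkey := key_arith q' g hq' hg hgq' (v i) ((r' i : ℕ):ℤ)
      (by positivity) (by exact_mod_cast (r' i).isLt) hdvd
    set y : ℤ := v i + (g:ℤ) * ((((((r' i : ℕ):ℤ) - v i)/g) % ((q'/g : ℕ):ℤ)).toNat : ℤ) with hy
    have h2 : y - ((r' i : ℕ):ℤ) = (q':ℤ) * (y / q') := by
      have := Int.emod_def y (q':ℤ)
      omega
    exact ⟨-(y / q'), by rw [← neg_sub y, h2]; ring⟩

lemma eI_def (x : ℂ) : Complex.exp (2*Real.pi*Complex.I * x) = eI x := rfl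

lemma conj_eI (x : ℂ) : (starRingEnd ℂ) (eI x) = eI (-((starRingEnd ℂ) x)) := by
  rw [eI, eI, ← Complex.exp_conj]
  congr 1
  simp only [map_mul, Complex.conj_I, Complex.conj_ofReal, map_ofNat]
  ring

lemma conj_factor {n : ℕ} (q' g d : ℕ) (a' : ℤ) (b : Fin n → Fin g) :
    (starRingEnd ℂ) ((1/(q':ℂ)^n) * ∑ r' : Fin n → Fin q',
        eI (((a':ℂ)/(q':ℂ)) * (∑ i, ((r' i : ℕ) : ℂ)^2)^d
              + ∑ i, (((b i : ℕ) : ℂ)/((g : ℕ) : ℂ)) * ((r' i : ℕ) : ℂ)))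
    = (1/(q':ℂ)^n) * ∑ r' : Fin n → Fin q',
        eI (-(((a':ℂ)/(q':ℂ)) * (∑ i, ((r' i : ℕ) : ℂ)^2)^d
              + ∑ i, (((b i : ℕ) : ℂ)/((g : ℕ) : ℂ)) * ((r' i : ℕ) : ℂ))) := by
  rw [map_mul, map_sum]
  congr 1
  · simp
  · refine Finset.sum_congr rfl fun r' _ => ?_
    rw [conj_eI]
    congr 1
    simp only [map_neg, map_add, map_mul, map_sum, map_pow, map_div₀,
      Complex.conj_natCast, map_intCast]

lemma mul_expand {α β : Type*} [Fintype α] [Fintype β] (A A' E : ℂ) (f : α → ℂ) (h : β → ℂ) :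
    (A * ∑ r, f r) * (A' * ∑ r', h r') * E = ∑ r, ∑ r', (A * A' * E) * (f r * h r') := by
  simp only [Finset.mul_sum, Finset.sum_mul]
  rw [Finset.sum_comm]
  exact Finset.sum_congr rfl fun _ _ => Finset.sum_congr rfl fun _ _ => by ring

lemma phase_eq {n : ℕ} (d q q' g : ℕ) (a a' : ℤ) (w : Fin n → ℤ)
    (b : Fin n → Fin g) (r : Fin n → Fin q) (r' : Fin n → Fin q') :
    eI (((a:ℂ)/(q:ℂ)) * (∑ i, ((r i : ℕ) : ℂ)^2)^d
          + ∑ i, (((b i : ℕ) : ℂ)/((g : ℕ) : ℂ)) * ((r i : ℕ) : ℂ))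
    * eI (-(((a':ℂ)/(q':ℂ)) * (∑ i, ((r' i : ℕ) : ℂ)^2)^d
          + ∑ i, (((b i : ℕ) : ℂ)/((g : ℕ) : ℂ)) * ((r' i : ℕ) : ℂ)))
    * eI (∑ i, (w i : ℂ) * (((b i : ℕ) : ℂ)/((g : ℕ) : ℂ)))
    = (eI (((a:ℂ)/(q:ℂ)) * (∑ i, ((r i : ℕ) : ℂ)^2)^d)
        * eI (((-a' : ℤ):ℂ) * (∑ i, ((((r' i : ℕ):ℤ)) : ℂ)^2)^d / (q':ℂ)))
      * ∏ i, eI (((b i : ℕ):ℂ)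
          * (((((r i : ℕ):ℤ) + w i - ((r' i : ℕ):ℤ)) : ℤ):ℂ) / ((g : ℕ):ℂ)) := by
  have hb : ∑ i, (((b i : ℕ):ℂ)
          * (((((r i : ℕ):ℤ) + w i - ((r' i : ℕ):ℤ)) : ℤ):ℂ) / ((g : ℕ):ℂ))
      = ∑ i, (((b i : ℕ) : ℂ)/((g : ℕ) : ℂ)) * ((r i : ℕ) : ℂ)
        - ∑ i, (((b i : ℕ) : ℂ)/((g : ℕ) : ℂ)) * ((r' i : ℕ) : ℂ)
        + ∑ i, (w i : ℂ) * (((b i : ℕ) : ℂ)/((g : ℕ) : ℂ)) := by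
    rw [← Finset.sum_sub_distrib, ← Finset.sum_add_distrib]
    exact Finset.sum_congr rfl fun i _ => by push_cast; ring
  rw [← eI_sum, ← eI_add, ← eI_add, ← eI_add, ← eI_add]
  congr 1
  have hS : (∑ i, ((((r' i : ℕ):ℤ)) : ℂ)^2) = (∑ i, ((r' i : ℕ) : ℂ)^2) := by
    push_cast; rfl
  rw [hS]
  push_cast at hb ⊢
  linear_combination -hb

lemma bsum {n : ℕ} (g : ℕ) (hg : 0 < g) (m : Fin n → ℤ) :
    (∑ b : Fin n → Fin g, ∏ i, eI (((b i : ℕ):ℂ) * ((m i : ℤ):ℂ) / ((g : ℕ):ℂ)))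
    = if ∀ i, (g:ℤ) ∣ m i then ((g:ℂ))^n else 0 := by
  classical
  rw [show (∑ b : Fin n → Fin g, ∏ i, eI (((b i : ℕ):ℂ) * ((m i:ℤ):ℂ) / ((g : ℕ):ℂ)))
      = ∏ i, ∑ x : Fin g, eI (((x : ℕ):ℂ) * ((m i:ℤ):ℂ) / ((g : ℕ):ℂ)) by
    rw [Finset.prod_univ_sum, Fintype.piFinset_univ]]
  rw [Finset.prod_congr rfl fun i _ => char_sum g hg (m i)]
  by_cases h : ∀ i, (g:ℤ) ∣ m i
  · rw [if_pos h, Finset.prod_congr rfl fun i _ => if_pos (h i)]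
    simp
  · rw [if_neg h]
    push_neg at h
    obtain ⟨i, hi⟩ := h
    exact Finset.prod_eq_zero (Finset.mem_univ i) (if_neg hi)

/-- Explicit computation of the `TT*` kernel for the major-arc
number-theoretic multipliers (equation (5.5) of the paper): summing
`S(a/q, b/q♭) conj(S(a'/q', b/q♭)) e(w·b/q♭)` over `b ∈ [0,q♭)ⁿ`, with
`q♭ = gcd(q,q')`, equals an average of complete exponential sums. -/
theorem stmt18 (n d q q' : ℕ) (hn : 0 < n) (hd : 0 < d)
    (hq : 0 < q) (hq' : 0 < q') (a a' : ℤ) (w : Fin n → ℤ) :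
    (∑ b : Fin n → Fin (Nat.gcd q q'),
      ((1/(q:ℂ)^n) * ∑ r : Fin n → Fin q,
        Complex.exp (2*Real.pi*Complex.I *
          (((a:ℂ)/(q:ℂ)) * (∑ i, ((r i : ℕ) : ℂ)^2)^d
            + ∑ i, (((b i : ℕ) : ℂ)/((Nat.gcd q q' : ℕ) : ℂ)) * ((r i : ℕ) : ℂ))))
      * (starRingEnd ℂ) ((1/(q':ℂ)^n) * ∑ r' : Fin n → Fin q',
          Complex.exp (2*Real.pi*Complex.I *
            (((a':ℂ)/(q':ℂ)) * (∑ i, ((r' i : ℕ) : ℂ)^2)^d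
              + ∑ i, (((b i : ℕ) : ℂ)/((Nat.gcd q q' : ℕ) : ℂ)) * ((r' i : ℕ) : ℂ))))
      * Complex.exp (2*Real.pi*Complex.I *
          (∑ i, (w i : ℂ) * (((b i : ℕ) : ℂ)/((Nat.gcd q q' : ℕ) : ℂ)))))
    = (((Nat.gcd q q' : ℕ) : ℂ)/(q':ℂ))^n *
      ∑ u : Fin n → Fin (q' / Nat.gcd q q'),
        (1/(q:ℂ)^n) * ∑ r : Fin n → Fin q,
          Complex.exp (2*Real.pi*Complex.I *
            (((a:ℂ)/(q:ℂ)) * (∑ i, ((r i : ℕ) : ℂ)^2)^d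
              - ((a':ℂ)/(q':ℂ)) *
                (∑ i, (((r i : ℕ) : ℂ) + (w i : ℂ)
                  + ((Nat.gcd q q' : ℕ) : ℂ) * ((u i : ℕ) : ℂ))^2)^d)) := by
  classical
  have hg : 0 < Nat.gcd q q' := Nat.gcd_pos_of_pos_left q' hq
  have hgq' : Nat.gcd q q' ∣ q' := Nat.gcd_dvd_right q q'
  set g : ℕ := Nat.gcd q q' with hgdef
  simp only [eI_def]
  trans (∑ b : Fin n → Fin g, ∑ r : Fin n → Fin q, ∑ r' : Fin n → Fin q',
      ((1/(q:ℂ)^n) * (1/(q':ℂ)^n) *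
        (eI (((a:ℂ)/(q:ℂ)) * (∑ i, ((r i : ℕ) : ℂ)^2)^d)
          * eI (((-a' : ℤ):ℂ) * (∑ i, ((((r' i : ℕ):ℤ)) : ℂ)^2)^d / (q':ℂ))))
      * ∏ i, eI (((b i : ℕ):ℂ)
          * (((((r i : ℕ):ℤ) + w i - ((r' i : ℕ):ℤ)) : ℤ):ℂ) / ((g : ℕ):ℂ)))
  · refine Finset.sum_congr rfl fun b _ => ?_
    rw [conj_factor q' g d a' b]
    rw [mul_expand]
    refine Finset.sum_congr rfl fun r _ => Finset.sum_congr rfl fun r' _ => ?_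
    have h := phase_eq d q q' g a a' w b r r'
    linear_combination ((1/(q:ℂ)^n) * (1/(q':ℂ)^n)) * h
  trans (∑ r : Fin n → Fin q, ∑ r' : Fin n → Fin q',
      ((1/(q:ℂ)^n) * (1/(q':ℂ)^n) *
        (eI (((a:ℂ)/(q:ℂ)) * (∑ i, ((r i : ℕ) : ℂ)^2)^d)
          * eI (((-a' : ℤ):ℂ) * (∑ i, ((((r' i : ℕ):ℤ)) : ℂ)^2)^d / (q':ℂ))))
      * (if ∀ i, (g:ℤ) ∣ (((r i : ℕ):ℤ) + w i - ((r' i : ℕ):ℤ)) then ((g:ℂ))^n else 0))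
  · rw [Finset.sum_comm]
    refine Finset.sum_congr rfl fun r _ => ?_
    rw [Finset.sum_comm]
    refine Finset.sum_congr rfl fun r' _ => ?_
    rw [← Finset.mul_sum]
    simp only [bsum g hg]
  trans (∑ r : Fin n → Fin q,
      ((1/(q:ℂ)^n) * (1/(q':ℂ)^n) *
        eI (((a:ℂ)/(q:ℂ)) * (∑ i, ((r i : ℕ) : ℂ)^2)^d))
      * (((g:ℂ))^n * ∑ u : Fin n → Fin (q' / g),
          eI (((-a' : ℤ):ℂ)
            * (∑ i, (((((r i : ℕ):ℤ) + w i + (g:ℤ) * ((u i : ℕ):ℤ)) : ℤ) : ℂ)^2)^d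
            / (q':ℂ))))
  · refine Finset.sum_congr rfl fun r _ => ?_
    have hb := bij_step (n := n) d q' g hq' hg hgq' (-a') (fun i => ((r i : ℕ):ℤ) + w i)
    rw [← hb, Finset.mul_sum]
    exact Finset.sum_congr rfl fun r' _ => by ring
  · -- final algebra
    have he : ∀ (r : Fin n → Fin q) (u : Fin n → Fin (q' / g)),
        eI (((a:ℂ)/(q:ℂ)) * (∑ i, ((r i : ℕ) : ℂ)^2)^d)
        * eI (((-a' : ℤ):ℂ)
            * (∑ i, (((((r i : ℕ):ℤ) + w i + (g:ℤ) * ((u i : ℕ):ℤ)) : ℤ) : ℂ)^2)^d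
            / (q':ℂ))
        = eI (((a:ℂ)/(q:ℂ)) * (∑ i, ((r i : ℕ) : ℂ)^2)^d
            - ((a':ℂ)/(q':ℂ)) *
              (∑ i, (((r i : ℕ) : ℂ) + (w i : ℂ)
                + ((g : ℕ) : ℂ) * ((u i : ℕ) : ℂ))^2)^d) := by
      intro r u
      rw [← eI_add]
      congr 1
      push_cast
      ring
    simp only [Finset.mul_sum]
    rw [Finset.sum_comm]
    refine Finset.sum_congr rfl fun u _ => Finset.sum_congr rfl fun r _ => ?_
    rw [← he r u, div_pow]
    ring
end
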